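/- Let f ∈ L¹(ℝ) with ∫_ℝ f(x)dx = 1 and let φ : ℝ → ℝ be essentially bounded and measurable. If (f⋆φ)(x) → α as x → ∞, then φ is almost convergent to α. -/

import Mathlib

open MeasureTheory Filter
open scoped ENNReal NNReal

/-- The convolution `(f⋆φ)(x) = ∫ φ(x-t) f(t) dt`. -/
noncomputable def conv (f φ : ℝ → ℝ) (x : ℝ) : ℝ := ∫ t : ℝ, φ (x - t) * f t

/-- `φ` is almost convergent (P-summable) to `α`. -/
def AlmostConvergentTo (φ : ℝ → ℝ) (α : ℝ) : Prop :=
  Tendsto (fun θ : ℝ =>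
      limsup (fun x : ℝ => (1 / θ) * ∫ t in x..(x + θ), φ t) atTop) atTop (nhds α) ∧
  Tendsto (fun θ : ℝ =>
      liminf (fun x : ℝ => (1 / θ) * ∫ t in x..(x + θ), φ t) atTop) atTop (nhds α)

lemma aux_main (g ψ : ℝ → ℝ) (hg : StronglyMeasurable g) (hgi : Integrable g)
    (hgone : ∫ t, g t = 1) (hψm : Measurable ψ) (M : ℝ) (hM : 0 < M)
    (hψb : ∀ u, |ψ u| ≤ M)
    (α : ℝ) (hconv : Tendsto (fun x => ∫ t : ℝ, ψ (x - t) * g t) atTop (nhds α)) :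
    AlmostConvergentTo ψ α := by
  have hψint : ∀ a b : ℝ, IntervalIntegrable ψ volume a b := by
    intro a b
    apply IntervalIntegrable.mono_fun (intervalIntegrable_const (c := M))
    · exact hψm.aestronglyMeasurable
    · filter_upwards with u
      simpa [Real.norm_eq_abs, abs_of_pos hM] using hψb u
  set F : ℝ → ℝ := fun x => ∫ t : ℝ, ψ (x - t) * g t with hF
  set I₁ : ℝ := ∫ t : ℝ, |g t| with hI₁
  have hI₁nonneg : 0 ≤ I₁ := integral_nonneg fun t => abs_nonneg _
  have hFbd : ∀ x, |F x| ≤ M * I₁ := by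
    intro x
    rw [hF, hI₁]
    calc |∫ t : ℝ, ψ (x - t) * g t| ≤ ∫ t : ℝ, |ψ (x - t)| * |g t| := by
          simpa [Real.norm_eq_abs, abs_mul] using
            norm_integral_le_integral_norm (μ := volume) (fun t => ψ (x - t) * g t)
      _ ≤ ∫ t : ℝ, M * |g t| := by
          apply integral_mono_of_nonneg
          · filter_upwards with t; positivity
          · exact hgi.abs.const_mul M
          · filter_upwards with t
            exact mul_le_mul_of_nonneg_right (hψb _) (abs_nonneg _)
      _ = M * ∫ t : ℝ, |g t| := integral_const_mul M _
  have hFmeas : StronglyMeasurable F := by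
    apply MeasureTheory.StronglyMeasurable.integral_prod_right'
      (f := fun p : ℝ × ℝ => ψ (p.1 - p.2) * g p.2)
    exact ((hψm.comp (measurable_fst.sub measurable_snd)).mul
      (hg.measurable.comp measurable_snd)).stronglyMeasurable
  set A : ℝ → ℝ → ℝ := fun θ x => ∫ u in x..(x + θ), ψ u with hA
  have hAbd : ∀ θ x, |A θ x| ≤ M * |θ| := by
    intro θ x
    have := intervalIntegral.norm_integral_le_of_norm_le_const
      (C := M) (f := ψ) (a := x) (b := x + θ) (fun u _ => by
        simpa [Real.norm_eq_abs] using hψb u)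
    simpa [Real.norm_eq_abs, hA, add_sub_cancel_left] using this
  have hAcont : ∀ θ, Continuous (A θ) := by
    intro θ
    have hΦ : Continuous (fun y => ∫ u in (0:ℝ)..y, ψ u) :=
      intervalIntegral.continuous_primitive hψint 0
    have hrepr : A θ = fun x => (∫ u in (0:ℝ)..(x+θ), ψ u) - ∫ u in (0:ℝ)..x, ψ u := by
      funext x
      have h := intervalIntegral.integral_add_adjacent_intervals (hψint 0 x) (hψint x (x+θ))
      simp only [hA]
      linarith
    rw [hrepr]
    exact (hΦ.comp (continuous_id.add continuous_const)).sub hΦ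
  -- difference estimate
  have hAdiff : ∀ θ : ℝ, 0 < θ → ∀ x t : ℝ, |A θ (x - t) - A θ x| ≤ 2 * M * min θ |t| := by
    intro θ hθ x t
    have h1 : A θ (x - t) - A θ x = (∫ u in (x-t)..x, ψ u) - ∫ u in (x-t+θ)..(x+θ), ψ u := by
      have e1 := intervalIntegral.integral_add_adjacent_intervals (hψint (x-t) x)
        (hψint x (x-t+θ))
      have e2 := intervalIntegral.integral_add_adjacent_intervals (hψint x (x-t+θ))
        (hψint (x-t+θ) (x+θ))
      simp only [hA]
      linarith
    have hb1 : |∫ u in (x-t)..x, ψ u| ≤ M * |t| := by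
      have := intervalIntegral.norm_integral_le_of_norm_le_const (C := M) (f := ψ)
        (a := x - t) (b := x) (fun u _ => by simpa [Real.norm_eq_abs] using hψb u)
      simpa [Real.norm_eq_abs, sub_sub_cancel_left, abs_neg] using this
    have hb2 : |∫ u in (x-t+θ)..(x+θ), ψ u| ≤ M * |t| := by
      have := intervalIntegral.norm_integral_le_of_norm_le_const (C := M) (f := ψ)
        (a := x - t + θ) (b := x + θ) (fun u _ => by simpa [Real.norm_eq_abs] using hψb u)
      have he : x + θ - (x - t + θ) = t := by ring
      simpa [Real.norm_eq_abs, he] using this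
    have case1 : |A θ (x - t) - A θ x| ≤ 2 * M * |t| := by
      rw [h1]
      calc |(∫ u in (x-t)..x, ψ u) - ∫ u in (x-t+θ)..(x+θ), ψ u|
          ≤ |∫ u in (x-t)..x, ψ u| + |∫ u in (x-t+θ)..(x+θ), ψ u| := abs_sub _ _
        _ ≤ M * |t| + M * |t| := add_le_add hb1 hb2
        _ = 2 * M * |t| := by ring
    have case2 : |A θ (x - t) - A θ x| ≤ 2 * M * θ := by
      calc |A θ (x - t) - A θ x| ≤ |A θ (x - t)| + |A θ x| := abs_sub _ _
        _ ≤ M * |θ| + M * |θ| := add_le_add (hAbd θ _) (hAbd θ _)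
        _ = 2 * M * θ := by rw [abs_of_pos hθ]; ring
    rcases le_total θ |t| with h | h
    · rw [min_eq_left h]; exact case2
    · rw [min_eq_right h]; exact case1
  -- Fubini
  have hFub : ∀ θ : ℝ, 0 < θ → ∀ x : ℝ,
      ∫ s in Set.Ioc (0:ℝ) θ, F (x + s) = ∫ t : ℝ, A θ (x - t) * g t := by
    intro θ hθ x
    have hmprod : AEStronglyMeasurable (fun z : ℝ × ℝ => ψ (x + z.1 - z.2) * g z.2)
        ((volume.restrict (Set.Ioc (0:ℝ) θ)).prod volume) :=
      ((hψm.comp ((measurable_const.add measurable_fst).sub measurable_snd)).mul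
        (hg.measurable.comp measurable_snd)).aestronglyMeasurable
    have hboundint : Integrable (fun z : ℝ × ℝ => M * |g z.2|)
        ((volume.restrict (Set.Ioc (0:ℝ) θ)).prod volume) := by
      have h1 : Integrable (fun _ : ℝ => M) (volume.restrict (Set.Ioc (0:ℝ) θ)) := by
        apply integrableOn_const measure_Ioc_lt_top.ne enorm_ne_top
      exact h1.mul_prod hgi.abs
    have hintprod : Integrable (fun z : ℝ × ℝ => ψ (x + z.1 - z.2) * g z.2)
        ((volume.restrict (Set.Ioc (0:ℝ) θ)).prod volume) := by
      apply hboundint.mono' hmprod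
      filter_upwards with z
      rw [Real.norm_eq_abs, abs_mul]
      exact mul_le_mul_of_nonneg_right (hψb _) (abs_nonneg _)
    have hswap := MeasureTheory.integral_integral_swap
      (f := fun s t => ψ (x + s - t) * g t) hintprod
    calc ∫ s in Set.Ioc (0:ℝ) θ, F (x + s)
        = ∫ s in Set.Ioc (0:ℝ) θ, ∫ t : ℝ, ψ (x + s - t) * g t := rfl
      _ = ∫ t : ℝ, ∫ s in Set.Ioc (0:ℝ) θ, ψ (x + s - t) * g t := hswap
      _ = ∫ t : ℝ, (∫ s in Set.Ioc (0:ℝ) θ, ψ (x + s - t)) * g t := by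
          congr 1; funext t
          exact integral_mul_const _ _
      _ = ∫ t : ℝ, A θ (x - t) * g t := by
          congr 1; funext t
          congr 1
          have h0 : ∫ s in Set.Ioc (0:ℝ) θ, ψ (x + s - t)
              = ∫ s in (0:ℝ)..θ, ψ ((x - t) + s) := by
            rw [intervalIntegral.integral_of_le hθ.le]
            congr 1; funext s; ring_nf
          rw [h0, intervalIntegral.integral_comp_add_left ψ (x - t)]
          simp [hA]
  -- D and key estimate
  set D : ℝ → ℝ := fun θ => ∫ t : ℝ, min θ |t| * |g t| with hD
  have hDint : ∀ θ : ℝ, 0 < θ → Integrable (fun t : ℝ => min θ |t| * |g t|) := by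
    intro θ hθ
    apply (hgi.abs.const_mul θ).mono'
    · exact ((measurable_const.min measurable_abs).mul hg.measurable.abs).aestronglyMeasurable
    · filter_upwards with t
      have h1 : (0:ℝ) ≤ min θ |t| := le_min hθ.le (abs_nonneg t)
      rw [Real.norm_eq_abs, abs_of_nonneg (mul_nonneg h1 (abs_nonneg _))]
      exact mul_le_mul_of_nonneg_right (min_le_left _ _) (abs_nonneg _)
  have hkey : ∀ θ : ℝ, 0 < θ → ∀ x : ℝ,
      |A θ x - ∫ s in Set.Ioc (0:ℝ) θ, F (x + s)| ≤ 2 * M * D θ := by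
    intro θ hθ x
    rw [hFub θ hθ x]
    have hint2 : Integrable (fun t : ℝ => A θ (x - t) * g t) := by
      apply (hgi.abs.const_mul (M * θ)).mono'
      · exact (((hAcont θ).comp (continuous_const.sub continuous_id)).measurable.mul
          hg.measurable).aestronglyMeasurable
      · filter_upwards with t
        rw [Real.norm_eq_abs, abs_mul]
        refine mul_le_mul_of_nonneg_right ?_ (abs_nonneg _)
        simpa [abs_of_pos hθ] using hAbd θ (x - t)
    have hx : A θ x = ∫ t : ℝ, A θ x * g t := by
      rw [integral_const_mul, hgone, mul_one]
    rw [hx, ← integral_sub ((hgi.const_mul _)) hint2]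
    calc |∫ t : ℝ, (A θ x * g t - A θ (x - t) * g t)|
        ≤ ∫ t : ℝ, |A θ x * g t - A θ (x - t) * g t| := by
          simpa [Real.norm_eq_abs] using norm_integral_le_integral_norm (μ := volume)
            (fun t => A θ x * g t - A θ (x - t) * g t)
      _ ≤ ∫ t : ℝ, 2 * M * (min θ |t| * |g t|) := by
          apply integral_mono_of_nonneg
          · filter_upwards with t; positivity
          · exact (hDint θ hθ).const_mul _
          · filter_upwards with t
            have : A θ x * g t - A θ (x - t) * g t = (A θ x - A θ (x - t)) * g t := by ring
            rw [this, abs_mul, ← abs_neg (A θ x - A θ (x - t)), neg_sub]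
            calc |A θ (x - t) - A θ x| * |g t|
                ≤ (2 * M * min θ |t|) * |g t| :=
                  mul_le_mul_of_nonneg_right (hAdiff θ hθ x t) (abs_nonneg _)
              _ = 2 * M * (min θ |t| * |g t|) := by ring
      _ = 2 * M * D θ := by rw [hD, integral_const_mul]
  -- (1/θ) * D θ → 0
  have hDlim : Tendsto (fun θ : ℝ => (1/θ) * D θ) atTop (nhds 0) := by
    have h0 : Tendsto (fun θ : ℝ => ∫ t : ℝ, (1/θ) * (min θ |t| * |g t|)) atTop
        (nhds (∫ t : ℝ, (0:ℝ))) := by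
      apply tendsto_integral_filter_of_dominated_convergence (bound := fun t => |g t|)
      · filter_upwards [eventually_gt_atTop (0:ℝ)] with θ hθ
        exact (((measurable_const.min measurable_abs).mul hg.measurable.abs).const_mul
          _).aestronglyMeasurable
      · filter_upwards [eventually_ge_atTop (1:ℝ)] with θ hθ
        filter_upwards with t
        have hθ0 : (0:ℝ) < θ := lt_of_lt_of_le one_pos hθ
        have h1 : (0:ℝ) ≤ min θ |t| := le_min hθ0.le (abs_nonneg t)
        rw [Real.norm_eq_abs, abs_of_nonneg (by positivity)]
        calc (1/θ) * (min θ |t| * |g t|) ≤ (1/θ) * (θ * |g t|) := by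
              apply mul_le_mul_of_nonneg_left _ (by positivity)
              exact mul_le_mul_of_nonneg_right (min_le_left _ _) (abs_nonneg _)
          _ = |g t| := by field_simp
      · exact hgi.abs
      · filter_upwards with t
        have : ∀ᶠ θ : ℝ in atTop, (1/θ) * (min θ |t| * |g t|) = (1/θ) * (|t| * |g t|) := by
          filter_upwards [eventually_ge_atTop |t|] with θ hθ
          rw [min_eq_right hθ]
        rw [tendsto_congr' this]
        have h2 : Tendsto (fun θ : ℝ => 1/θ) atTop (nhds 0) := by
          simpa [one_div] using tendsto_inv_atTop_zero
        simpa using h2.mul_const (|t| * |g t|)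
    have heq : (fun θ : ℝ => (1/θ) * D θ)
        = fun θ : ℝ => ∫ t : ℝ, (1/θ) * (min θ |t| * |g t|) := by
      funext θ
      rw [hD, integral_const_mul]
    rw [heq]
    simpa using h0
  -- for fixed θ, averages of F converge
  have hLx : ∀ θ : ℝ, 0 < θ →
      Tendsto (fun x : ℝ => ∫ s in Set.Ioc (0:ℝ) θ, F (x + s)) atTop (nhds (θ * α)) := by
    intro θ hθ
    have h0 : Tendsto (fun x : ℝ => ∫ s in Set.Ioc (0:ℝ) θ, F (x + s)) atTop
        (nhds (∫ _ in Set.Ioc (0:ℝ) θ, α)) := by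
      apply tendsto_integral_filter_of_dominated_convergence (bound := fun _ => M * I₁)
      · filter_upwards with x
        exact (hFmeas.measurable.comp (measurable_const.add measurable_id)).aestronglyMeasurable
      · filter_upwards with x
        filter_upwards with s
        simpa [Real.norm_eq_abs] using hFbd (x + s)
      · exact integrableOn_const measure_Ioc_lt_top.ne enorm_ne_top
      · filter_upwards with s
        exact hconv.comp (tendsto_atTop_add_const_right atTop s tendsto_id)
    have : ∫ _ in Set.Ioc (0:ℝ) θ, α = θ * α := by
      simp [Real.volume_Ioc, hθ.le, smul_eq_mul]
    rwa [this] at h0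
  -- epsilon
  set ε : ℝ → ℝ := fun θ => (1/θ) * (2 * M * D θ) with hε
  have hεlim : Tendsto ε atTop (nhds 0) := by
    have h1 := hDlim.const_mul (2 * M)
    rw [mul_zero] at h1
    have : ε = fun θ => 2 * M * ((1/θ) * D θ) := by funext θ; rw [hε]; ring
    rw [this]
    exact h1
  -- eventual two-sided bound for fixed θ
  have hev : ∀ θ : ℝ, 0 < θ → ∀ δ : ℝ, 0 < δ →
      ∀ᶠ x in atTop, |(1/θ) * A θ x - α| ≤ ε θ + δ := by
    intro θ hθ δ hδ
    have h1 := Metric.tendsto_nhds.mp (hLx θ hθ) (θ * δ) (by positivity)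
    filter_upwards [h1] with x hx
    rw [Real.dist_eq] at hx
    have h2 := hkey θ hθ x
    have h3 : |A θ x - θ * α| ≤ 2 * M * D θ + θ * δ := by
      calc |A θ x - θ * α|
          ≤ |A θ x - ∫ s in Set.Ioc (0:ℝ) θ, F (x + s)|
            + |(∫ s in Set.Ioc (0:ℝ) θ, F (x + s)) - θ * α| := abs_sub_le _ _ _
        _ ≤ 2 * M * D θ + θ * δ := add_le_add h2 hx.le
    have hθ0 : θ ≠ 0 := ne_of_gt hθ
    have h4 : (1/θ) * A θ x - α = (1/θ) * (A θ x - θ * α) := by field_simp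
    rw [h4, abs_mul, abs_of_pos (by positivity : (0:ℝ) < 1/θ)]
    calc (1/θ) * |A θ x - θ * α| ≤ (1/θ) * (2 * M * D θ + θ * δ) := by
          exact mul_le_mul_of_nonneg_left h3 (by positivity)
      _ = ε θ + δ := by rw [hε]; field_simp
  -- boundedness
  have hb_le : ∀ θ : ℝ, 0 < θ →
      IsBoundedUnder (· ≤ ·) atTop (fun x : ℝ => (1/θ) * A θ x) := by
    intro θ hθ
    refine isBoundedUnder_of ⟨M, fun x => ?_⟩
    have := hAbd θ x
    rw [abs_of_pos hθ] at this
    calc (1/θ) * A θ x ≤ (1/θ) * (M * θ) := by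
          exact mul_le_mul_of_nonneg_left ((le_abs_self _).trans this) (by positivity)
      _ = M := by field_simp
  have hb_ge : ∀ θ : ℝ, 0 < θ →
      IsBoundedUnder (· ≥ ·) atTop (fun x : ℝ => (1/θ) * A θ x) := by
    intro θ hθ
    refine isBoundedUnder_of ⟨-M, fun x => ?_⟩
    have := hAbd θ x
    rw [abs_of_pos hθ] at this
    have h5 : -(M * θ) ≤ A θ x := neg_le_of_abs_le this
    calc (1/θ) * A θ x ≥ (1/θ) * (-(M * θ)) := by
          exact mul_le_mul_of_nonneg_left h5 (by positivity)
      _ = -M := by field_simp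
  -- limsup and liminf bounds
  have hup : ∀ θ : ℝ, 0 < θ →
      limsup (fun x : ℝ => (1/θ) * A θ x) atTop ≤ α + ε θ := by
    intro θ hθ
    apply le_of_forall_pos_le_add
    intro δ hδ
    apply limsup_le_of_le ((hb_ge θ hθ).isCoboundedUnder_le)
    filter_upwards [hev θ hθ δ hδ] with x hx
    have := (abs_le.mp hx).2
    linarith
  have hlow : ∀ θ : ℝ, 0 < θ →
      α - ε θ ≤ liminf (fun x : ℝ => (1/θ) * A θ x) atTop := by
    intro θ hθ
    have h6 : ∀ δ : ℝ, 0 < δ → α - ε θ ≤ liminf (fun x : ℝ => (1/θ) * A θ x) atTop + δ := by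
      intro δ hδ
      have h7 : α - ε θ - δ ≤ liminf (fun x : ℝ => (1/θ) * A θ x) atTop := by
        apply le_liminf_of_le ((hb_le θ hθ).isCoboundedUnder_ge)
        filter_upwards [hev θ hθ δ hδ] with x hx
        have := (abs_le.mp hx).1
        linarith
      linarith
    exact le_of_forall_pos_le_add h6
  have hliminf_le_limsup : ∀ θ : ℝ, 0 < θ →
      liminf (fun x : ℝ => (1/θ) * A θ x) atTop
        ≤ limsup (fun x : ℝ => (1/θ) * A θ x) atTop := by
    intro θ hθ
    exact liminf_le_limsup (hb_le θ hθ) (hb_ge θ hθ)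
  have htendsto_lo : Tendsto (fun θ : ℝ => α - ε θ) atTop (nhds α) := by
    simpa using tendsto_const_nhds.sub hεlim
  have htendsto_hi : Tendsto (fun θ : ℝ => α + ε θ) atTop (nhds α) := by
    simpa using tendsto_const_nhds.add hεlim
  constructor
  · apply tendsto_of_tendsto_of_tendsto_of_le_of_le' htendsto_lo htendsto_hi
    · filter_upwards [eventually_gt_atTop (0:ℝ)] with θ hθ
      exact le_trans (hlow θ hθ) (hliminf_le_limsup θ hθ)
    · filter_upwards [eventually_gt_atTop (0:ℝ)] with θ hθ
      exact hup θ hθ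
  · apply tendsto_of_tendsto_of_tendsto_of_le_of_le' htendsto_lo htendsto_hi
    · filter_upwards [eventually_gt_atTop (0:ℝ)] with θ hθ
      exact hlow θ hθ
    · filter_upwards [eventually_gt_atTop (0:ℝ)] with θ hθ
      exact le_trans (hliminf_le_limsup θ hθ) (hup θ hθ)

/-- Abelian theorem: if `f ∈ L¹(ℝ)` with `∫ f = 1` and `(f⋆φ)(x) → α` as `x → ∞`, then
`φ` is almost convergent to `α`. -/
theorem almostConvergent_of_conv_tendsto (f : ℝ → ℝ) (hf : Integrable f)
    (hfone : ∫ x, f x = 1)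
    (φ : ℝ → ℝ) (hmeas : Measurable φ) (hbdd : MemLp φ ⊤ (volume : Measure ℝ))
    (α : ℝ) (hconv : Tendsto (fun x => conv f φ x) atTop (nhds α)) :
    AlmostConvergentTo φ α := by
  classical
  set M : ℝ := (eLpNormEssSup φ volume).toReal + 1 with hMdef
  have hSfin : eLpNormEssSup φ volume ≠ ⊤ := by
    have h := hbdd.2
    rw [eLpNorm_exponent_top] at h
    exact h.ne
  have hM : 0 < M := by
    have : (0:ℝ) ≤ (eLpNormEssSup φ volume).toReal := ENNReal.toReal_nonneg
    rw [hMdef]; linarith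
  have hae : ∀ᵐ u : ℝ ∂volume, |φ u| ≤ M := by
    filter_upwards [ae_le_eLpNormEssSup (f := φ) (μ := volume)] with u hu
    have h1 : ((‖φ u‖₊ : ℝ≥0∞)).toReal ≤ (eLpNormEssSup φ volume).toReal :=
      ENNReal.toReal_mono hSfin hu
    have h2 : ((‖φ u‖₊ : ℝ≥0∞)).toReal = |φ u| := by
      simp [Real.norm_eq_abs]
    rw [h2] at h1
    rw [hMdef]; linarith
  set ψ : ℝ → ℝ := fun u => if |φ u| ≤ M then φ u else 0 with hψdef
  have hψm : Measurable ψ :=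
    Measurable.ite (measurableSet_le hmeas.abs measurable_const) hmeas measurable_const
  have hψb : ∀ u, |ψ u| ≤ M := by
    intro u
    rw [hψdef]
    by_cases h : |φ u| ≤ M
    · simp [h]
    · simp [h, hM.le]
  have hψφ : ψ =ᵐ[volume] φ := by
    filter_upwards [hae] with u hu
    simp [hψdef, hu]
  set g : ℝ → ℝ := hf.1.mk f with hgdef
  have hgm : StronglyMeasurable g := hf.1.stronglyMeasurable_mk
  have hfg : f =ᵐ[volume] g := hf.1.ae_eq_mk
  have hgi : Integrable g := hf.congr hfg
  have hgone : ∫ t, g t = 1 := by rw [← integral_congr_ae hfg, hfone]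
  have hconv' : Tendsto (fun x => ∫ t : ℝ, ψ (x - t) * g t) atTop (nhds α) := by
    have heq : (fun x => ∫ t : ℝ, ψ (x - t) * g t) = fun x => conv f φ x := by
      funext x
      apply integral_congr_ae
      have h1 : (fun t => ψ (x - t)) =ᵐ[volume] fun t => φ (x - t) :=
        (quasiMeasurePreserving_sub_left_of_right_invariant volume x).ae_eq hψφ
      filter_upwards [h1, hfg] with t h1t h2t
      rw [h1t, h2t]
    rw [heq]
    exact hconv
  have key := aux_main g ψ hgm hgi hgone hψm M hM hψb α hconv'
  have hfun : ∀ θ : ℝ, (fun x : ℝ => (1/θ) * ∫ t in x..(x+θ), φ t)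
      = fun x : ℝ => (1/θ) * ∫ t in x..(x+θ), ψ t := by
    intro θ
    funext x
    congr 1
    apply intervalIntegral.integral_congr_ae
    filter_upwards [hψφ] with t ht _
    exact ht.symm
  constructor
  · have h2 : (fun θ : ℝ => limsup (fun x : ℝ => (1/θ) * ∫ t in x..(x+θ), φ t) atTop)
        = fun θ : ℝ => limsup (fun x : ℝ => (1/θ) * ∫ t in x..(x+θ), ψ t) atTop := by
      funext θ; rw [hfun θ]
    rw [h2]
    exact key.1
  · have h2 : (fun θ : ℝ => liminf (fun x : ℝ => (1/θ) * ∫ t in x..(x+θ), φ t) atTop)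
        = fun θ : ℝ => liminf (fun x : ℝ => (1/θ) * ∫ t in x..(x+θ), ψ t) atTop := by
      funext θ; rw [hfun θ]
    rw [h2]
    exact key.2
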